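/- arXiv:2602.05631 — 3 statements merged into one kernel-verified Lean document; each statement's English description precedes it below -/
import Mathlib

section
/- Let M be positive semidefinite and Y ∈ ℝ^{n×p} be such that all eigenvalues of YᵀMY lie in [5/6, 7/6]. Then ‖Y − Y(YᵀMY)^{-1/2}‖_F ≤ (3/2)·‖Y‖_F·‖YᵀMY − I_p‖₂. -/
open Matrix

attribute [local instance] Matrix.frobeniusNormedAddCommGroup Matrix.frobeniusNormedSpace

/-- The spectral (operator 2-) norm of a real square matrix. -/
noncomputable def specNorm {p : ℕ} (A : Matrix (Fin p) (Fin p) ℝ) : ℝ :=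
  ‖(Matrix.toEuclideanCLM (𝕜 := ℝ) A : EuclideanSpace ℝ (Fin p) →L[ℝ] EuclideanSpace ℝ (Fin p))‖

/-- The positive semidefinite square root of a positive semidefinite matrix
(the definition `Matrix.PosSemidef.sqrt` of the older Mathlib, since removed). -/
noncomputable def Matrix.PosSemidef.sqrt {n : Type*} [Fintype n] [DecidableEq n] {𝕜 : Type*}
    [RCLike 𝕜] [PartialOrder 𝕜] [StarOrderedRing 𝕜] {A : Matrix n n 𝕜} (hA : A.PosSemidef) : Matrix n n 𝕜 :=
  hA.1.eigenvectorUnitary.1 * diagonal ((↑) ∘ (√·) ∘ hA.1.eigenvalues) *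
  (star hA.1.eigenvectorUnitary : Matrix n n 𝕜)

lemma frob_eq {n p : ℕ} (A : Matrix (Fin n) (Fin p) ℝ) :
    ‖A‖ = Real.sqrt (∑ i, ∑ j, (A i j) ^ 2) := by
  rw [Matrix.frobenius_norm_def, Real.sqrt_eq_rpow]
  congr 1
  refine Finset.sum_congr rfl fun i _ => Finset.sum_congr rfl fun j _ => ?_
  rw [Real.norm_eq_abs, Real.rpow_two, sq_abs]

lemma row_sq {n p : ℕ} (B : Matrix (Fin n) (Fin p) ℝ) (i : Fin n) :
    ∑ j, (B i j) ^ 2 = (B * Bᵀ) i i := by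
  rw [Matrix.mul_apply]
  exact Finset.sum_congr rfl fun j _ => by rw [Matrix.transpose_apply, sq]

lemma frob_mul_unitary {n p : ℕ} (A : Matrix (Fin n) (Fin p) ℝ)
    (V : Matrix (Fin p) (Fin p) ℝ) (hV : V * Vᵀ = 1) : ‖A * V‖ = ‖A‖ := by
  rw [frob_eq, frob_eq]
  congr 1
  refine Finset.sum_congr rfl fun i _ => ?_
  rw [row_sq, row_sq, Matrix.transpose_mul,
    show A * V * (Vᵀ * Aᵀ) = A * (V * Vᵀ) * Aᵀ by rw [← Matrix.mul_assoc, Matrix.mul_assoc A V Vᵀ],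
    hV, Matrix.mul_one]

lemma frob_mul_diag {n p : ℕ} (A : Matrix (Fin n) (Fin p) ℝ) (c : Fin p → ℝ)
    (B : ℝ) (hB : 0 ≤ B) (hc : ∀ j, |c j| ≤ B) :
    ‖A * Matrix.diagonal c‖ ≤ B * ‖A‖ := by
  rw [frob_eq, frob_eq]
  have h1 : ∑ i, ∑ j, ((A * Matrix.diagonal c) i j) ^ 2 ≤ B ^ 2 * ∑ i, ∑ j, (A i j) ^ 2 := by
    rw [Finset.mul_sum]
    refine Finset.sum_le_sum fun i _ => ?_
    rw [Finset.mul_sum]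
    refine Finset.sum_le_sum fun j _ => ?_
    rw [Matrix.mul_diagonal, mul_pow]
    have : (c j) ^ 2 ≤ B ^ 2 := by
      rw [← sq_abs (c j)]
      exact pow_le_pow_left₀ (abs_nonneg _) (hc j) 2
    nlinarith [sq_nonneg (A i j)]
  calc Real.sqrt (∑ i, ∑ j, ((A * Matrix.diagonal c) i j) ^ 2)
      ≤ Real.sqrt (B ^ 2 * ∑ i, ∑ j, (A i j) ^ 2) := Real.sqrt_le_sqrt h1
    _ = B * Real.sqrt (∑ i, ∑ j, (A i j) ^ 2) := by
        rw [Real.sqrt_mul (sq_nonneg B), Real.sqrt_sq hB]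

lemma scalar_ineq (t : ℝ) (ht : 5 / 6 ≤ t) :
    |1 - (Real.sqrt t)⁻¹| ≤ 3 / 2 * |t - 1| := by
  set s := Real.sqrt t with hs
  have ht0 : (0:ℝ) ≤ t := by linarith
  have hs2 : s ^ 2 = t := Real.sq_sqrt ht0
  have hs0 : 0 < s := Real.sqrt_pos.mpr (by linarith)
  have h1 : 1 - s⁻¹ = (s - 1) / s := by field_simp
  have h2 : t - 1 = (s - 1) * (s + 1) := by nlinarith
  rw [h1, h2, abs_div, abs_of_pos hs0, abs_mul, abs_of_pos (by linarith : (0:ℝ) < s + 1),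
    div_le_iff₀ hs0]
  nlinarith [abs_nonneg (s - 1), sq_nonneg s]

lemma eig_le_specNorm {p : ℕ} {A : Matrix (Fin p) (Fin p) ℝ} (hA : A.IsHermitian) (i : Fin p) :
    |hA.eigenvalues i - 1| ≤ specNorm (A - 1) := by
  set v : EuclideanSpace ℝ (Fin p) := hA.eigenvectorBasis i with hvdef
  have hv : ‖v‖ = 1 := hA.eigenvectorBasis.orthonormal.1 i
  have hTv : (Matrix.toEuclideanCLM (𝕜 := ℝ) (A - 1)) v = (hA.eigenvalues i - 1) • v := by
    apply (WithLp.equiv 2 (Fin p → ℝ)).injective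
    rw [WithLp.equiv_apply, Matrix.ofLp_toEuclideanCLM, Matrix.sub_mulVec,
      Matrix.one_mulVec]
    have h := hA.mulVec_eigenvectorBasis i
    ext j
    simp only [WithLp.equiv_apply, Pi.sub_apply, sub_smul, one_smul]
    rw [show (A *ᵥ v.ofLp) = hA.eigenvalues i • (hA.eigenvectorBasis i).ofLp from h]
    simp [hvdef, sub_smul]
  have hle := (Matrix.toEuclideanCLM (𝕜 := ℝ) (A - 1)).le_opNorm v
  rw [hTv, norm_smul, hv, Real.norm_eq_abs, mul_one, mul_one] at hle
  exact hle

/-- If `M` is PSD and all eigenvalues of `YᵀMY` lie in `[5/6, 7/6]`, then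
`‖Y − Y(YᵀMY)^{-1/2}‖_F ≤ (3/2)‖Y‖_F ‖YᵀMY − I‖₂`. -/
theorem stmt_2 {n p : ℕ} (M : Matrix (Fin n) (Fin n) ℝ) (hM : M.PosSemidef)
    (Y : Matrix (Fin n) (Fin p) ℝ) (hS : (Yᵀ * M * Y).PosSemidef)
    (heig : ∀ i, hS.1.eigenvalues i ∈ Set.Icc (5 / 6 : ℝ) (7 / 6)) :
    ‖Y - Y * (hS.sqrt)⁻¹‖ ≤ (3 / 2) * ‖Y‖ * specNorm (Yᵀ * M * Y - 1) := by
  classical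
  set lam : Fin p → ℝ := hS.1.eigenvalues with hlam
  set V : Matrix (Fin p) (Fin p) ℝ := (hS.1.eigenvectorUnitary : Matrix (Fin p) (Fin p) ℝ) with hVdef
  have hU1 : V * star V = 1 := (Matrix.mem_unitaryGroup_iff).mp hS.1.eigenvectorUnitary.2
  have hU2 : star V * V = 1 := (Matrix.mem_unitaryGroup_iff').mp hS.1.eigenvectorUnitary.2
  have hstarV : star V = Vᵀ := by
    rw [Matrix.star_eq_conjTranspose, Matrix.conjTranspose_eq_transpose_of_trivial]
  have hpos : ∀ j, 0 < Real.sqrt (lam j) :=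
    fun j => Real.sqrt_pos.mpr (lt_of_lt_of_le (by norm_num) (heig j).1)
  have hsqrt : hS.sqrt = V * Matrix.diagonal (fun j => Real.sqrt (lam j)) * star V := by
    rw [Matrix.PosSemidef.sqrt]
    rfl
  have hinv : (hS.sqrt)⁻¹ = V * Matrix.diagonal (fun j => (Real.sqrt (lam j))⁻¹) * star V := by
    apply Matrix.inv_eq_right_inv
    rw [hsqrt,
      show V * Matrix.diagonal (fun j => Real.sqrt (lam j)) * star V *
          (V * Matrix.diagonal (fun j => (Real.sqrt (lam j))⁻¹) * star V) =
        V * (Matrix.diagonal (fun j => Real.sqrt (lam j)) * ((star V * V) *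
          Matrix.diagonal (fun j => (Real.sqrt (lam j))⁻¹))) * star V by noncomm_ring,
      hU2, one_mul, Matrix.diagonal_mul_diagonal]
    have : (fun j => Real.sqrt (lam j) * (Real.sqrt (lam j))⁻¹) = fun _ => (1:ℝ) := by
      funext j; exact mul_inv_cancel₀ (ne_of_gt (hpos j))
    rw [this, Matrix.diagonal_one, Matrix.mul_one, hU1]
  set c : Fin p → ℝ := fun j => 1 - (Real.sqrt (lam j))⁻¹ with hc
  have key : Y - Y * (hS.sqrt)⁻¹ = Y * V * Matrix.diagonal c * star V := by
    have hdc : Matrix.diagonal c =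
        1 - Matrix.diagonal (fun j => (Real.sqrt (lam j))⁻¹) := by
      rw [← Matrix.diagonal_one, ← Matrix.diagonal_sub]
    rw [hinv, hdc, Matrix.mul_sub, Matrix.mul_one, Matrix.sub_mul]
    congr 1
    · rw [Matrix.mul_assoc, hU1, Matrix.mul_one]
    · rw [Matrix.mul_assoc, Matrix.mul_assoc, ← Matrix.mul_assoc Y V]
  set B : ℝ := 3 / 2 * specNorm (Yᵀ * M * Y - 1) with hB
  have hB0 : 0 ≤ B := mul_nonneg (by norm_num) (norm_nonneg _)
  have hcB : ∀ j, |c j| ≤ B := fun j =>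
    (scalar_ineq (lam j) (heig j).1).trans
      (by
        have := eig_le_specNorm hS.1 j
        rw [hB]
        nlinarith [this])
  calc ‖Y - Y * (hS.sqrt)⁻¹‖ = ‖Y * V * Matrix.diagonal c * star V‖ := by rw [key]
    _ = ‖Y * V * Matrix.diagonal c‖ := by
        apply frob_mul_unitary
        rw [hstarV, Matrix.transpose_transpose, ← hstarV, hU2]
    _ ≤ B * ‖Y * V‖ := frob_mul_diag _ _ _ hB0 hcB
    _ = B * ‖Y‖ := by rw [frob_mul_unitary Y V (by rw [← hstarV, hU1])]
    _ = 3 / 2 * ‖Y‖ * specNorm (Yᵀ * M * Y - 1) := by rw [hB]; ring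
end

section
/- Let f : ℝ^{n×p} → ℝ be differentiable, M positive semidefinite, β > 0, G(X) := ∇f(X((3/2)I_p − (1/2)XᵀMX)), and let ∇h(X) = G(X)((3/2)I_p − (1/2)XᵀMX) − MX·Ψ(XᵀG(X)) + β·MX(XᵀMX − I_p). Then ⟨∇h(Y), Y(YᵀMY − I_p)⟩ = ⟨β·YᵀMY − (3/2)·Ψ(YᵀG(Y)), (YᵀMY − I_p)²⟩ for all Y ∈ ℝ^{n×p}. -/
open Matrix

attribute [local instance] Matrix.frobeniusNormedAddCommGroup Matrix.frobeniusNormedSpace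

theorem aux8 {p : ℕ} (S A : Matrix (Fin p) (Fin p) ℝ) (hS : Sᵀ = S) (β : ℝ) :
    ((((3/2:ℝ) • (1 : Matrix (Fin p) (Fin p) ℝ) - (1/2:ℝ) • S)ᵀ) * (Aᵀ * (S - 1))).trace
    - (((1/2:ℝ) • (A + Aᵀ))ᵀ * (S * (S - 1))).trace
    + β * ((S - 1)ᵀ * (S * (S - 1))).trace
    = ((β • S - (3/2:ℝ) • ((1/2:ℝ) • (A + Aᵀ)))ᵀ * (S - 1) ^ 2).trace := by
  have key : ∀ X : Matrix (Fin p) (Fin p) ℝ, Xᵀ = X → (Aᵀ * X).trace = (A * X).trace := by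
    intro X hX
    rw [← trace_transpose, transpose_mul, transpose_transpose, hX, trace_mul_comm]
  have c1 : (S * (Aᵀ * S)).trace = (Aᵀ * (S * S)).trace := by
    rw [trace_mul_comm, Matrix.mul_assoc]
  have c2 : (S * Aᵀ).trace = (Aᵀ * S).trace := trace_mul_comm _ _
  have k1 : (Aᵀ * S).trace = (A * S).trace := key S hS
  have k2 : (Aᵀ * (S * S)).trace = (A * (S * S)).trace := key _ (by rw [transpose_mul, hS])
  have k0 : (Aᵀ).trace = A.trace := trace_transpose A
  simp only [transpose_sub, transpose_add, transpose_smul, transpose_one, transpose_mul,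
    transpose_transpose, hS, sq, sub_mul, mul_sub, add_mul, mul_add, smul_mul_assoc,
    mul_smul_comm, trace_add, trace_sub, trace_smul, mul_one, one_mul, Matrix.mul_assoc,
    trace_one, c1, c2, k1, k2, k0, smul_eq_mul]
  ring

/-- For differentiable `f` with gradient `gf`, `G(X) := ∇f(X((3/2)I − (1/2)XᵀMX))` and
`∇h(X) = G(X)((3/2)I − (1/2)XᵀMX) − MX Ψ(XᵀG(X)) + β MX(XᵀMX − I)`, one has
`⟨∇h(Y), Y(YᵀMY − I)⟩ = ⟨β YᵀMY − (3/2)Ψ(YᵀG(Y)), (YᵀMY − I)²⟩` for all `Y`. -/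
theorem stmt_8 {n p : ℕ} (M : Matrix (Fin n) (Fin n) ℝ) (hM : M.PosSemidef)
    (β : ℝ) (hβ : 0 < β)
    (f : Matrix (Fin n) (Fin p) ℝ → ℝ) (hf : Differentiable ℝ f)
    (gf : Matrix (Fin n) (Fin p) ℝ → Matrix (Fin n) (Fin p) ℝ)
    (hgf : ∀ X H, fderiv ℝ f X H = ((gf X)ᵀ * H).trace)
    (G : Matrix (Fin n) (Fin p) ℝ → Matrix (Fin n) (Fin p) ℝ)
    (hG : ∀ X, G X = gf (X * ((3 / 2 : ℝ) • (1 : Matrix (Fin p) (Fin p) ℝ)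
        - (1 / 2 : ℝ) • (Xᵀ * M * X))))
    (gradh : Matrix (Fin n) (Fin p) ℝ → Matrix (Fin n) (Fin p) ℝ)
    (hgradh : ∀ X, gradh X =
      G X * ((3 / 2 : ℝ) • (1 : Matrix (Fin p) (Fin p) ℝ) - (1 / 2 : ℝ) • (Xᵀ * M * X))
      - M * X * ((1 / 2 : ℝ) • (Xᵀ * G X + (Xᵀ * G X)ᵀ))
      + β • (M * X * (Xᵀ * M * X - 1))) :
    ∀ Y : Matrix (Fin n) (Fin p) ℝ,
      ((gradh Y)ᵀ * (Y * (Yᵀ * M * Y - 1))).trace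
        = ((β • (Yᵀ * M * Y)
            - (3 / 2 : ℝ) • ((1 / 2 : ℝ) • (Yᵀ * G Y + (Yᵀ * G Y)ᵀ)))ᵀ
            * (Yᵀ * M * Y - 1) ^ 2).trace := by
  intro Y
  have hMt : Mᵀ = M := (by simpa using hM.1 : M.IsSymm).eq
  have hSt : (Yᵀ * M * Y)ᵀ = Yᵀ * M * Y := by
    rw [transpose_mul, transpose_mul, hMt, transpose_transpose, ← Matrix.mul_assoc]
  rw [hgradh]
  have hfoldA' : (G Y)ᵀ * Y = (Yᵀ * G Y)ᵀ := by
    rw [← transpose_transpose Y, ← transpose_mul, transpose_transpose]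
  set C : Matrix (Fin p) (Fin p) ℝ :=
    (3 / 2 : ℝ) • (1 : Matrix (Fin p) (Fin p) ℝ) - (1 / 2 : ℝ) • (Yᵀ * M * Y) with hC
  set Ψ : Matrix (Fin p) (Fin p) ℝ :=
    (1 / 2 : ℝ) • (Yᵀ * G Y + (Yᵀ * G Y)ᵀ) with hΨ
  set T : Matrix (Fin p) (Fin p) ℝ := Yᵀ * M * Y - 1 with hT
  have e1 : ((G Y * C)ᵀ * (Y * T)).trace = (Cᵀ * ((Yᵀ * G Y)ᵀ * T)).trace := by
    rw [transpose_mul, Matrix.mul_assoc, ← Matrix.mul_assoc ((G Y)ᵀ) Y T, hfoldA']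
  have e2 : ((M * Y * Ψ)ᵀ * (Y * T)).trace = (Ψᵀ * ((Yᵀ * M * Y) * T)).trace := by
    rw [transpose_mul, transpose_mul, hMt, Matrix.mul_assoc,
      ← Matrix.mul_assoc (Yᵀ * M) Y T]
  have e3 : ((M * Y * T)ᵀ * (Y * T)).trace = (Tᵀ * ((Yᵀ * M * Y) * T)).trace := by
    rw [transpose_mul, transpose_mul, hMt, Matrix.mul_assoc,
      ← Matrix.mul_assoc (Yᵀ * M) Y T]
  have expand : ((G Y * C - M * Y * Ψ + β • (M * Y * T))ᵀ * (Y * T)).trace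
      = (Cᵀ * ((Yᵀ * G Y)ᵀ * T)).trace - (Ψᵀ * ((Yᵀ * M * Y) * T)).trace
        + β * (Tᵀ * ((Yᵀ * M * Y) * T)).trace := by
    simp only [transpose_add, transpose_sub, transpose_smul, Matrix.add_mul, Matrix.sub_mul,
      Matrix.smul_mul, trace_add, trace_sub, trace_smul, smul_eq_mul, e1, e2, e3]
  rw [expand, hC, hΨ, hT]
  exact aux8 (Yᵀ * M * Y) (Yᵀ * G Y) hSt β
end

section
/- Let c(X) := ‖XᵀMX − I_p‖_F² for M positive semidefinite. Suppose X* ∈ ℝ^{n×p}, v is a unit eigenvector of (X*)ᵀMX* with eigenvalue λ := λ_min((X*)ᵀMX*), and D := X* v vᵀ. Then ⟨D, ∇²c(X*)[D]⟩ = 4λ(3λ − 1). -/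
open Matrix

private lemma iter2_poly (K b c d e : ℝ) :
    iteratedDeriv 2 (fun t : ℝ => K + b*t + c*t^2 + d*t^3 + e*t^4) 0 = 2*c := by
  have h1 : ∀ x : ℝ, HasDerivAt (fun t : ℝ => K + b*t + c*t^2 + d*t^3 + e*t^4)
      (b + 2*c*x + 3*d*x^2 + 4*e*x^3) x := by
    intro x
    have h := ((((hasDerivAt_const x K).add ((hasDerivAt_id x).const_mul b)).add
      ((hasDerivAt_pow 2 x).const_mul c)).add ((hasDerivAt_pow 3 x).const_mul d)).add
      ((hasDerivAt_pow 4 x).const_mul e)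
    refine h.congr_deriv ?_
    push_cast; ring
  have h2 : ∀ x : ℝ, HasDerivAt (fun x : ℝ => b + 2*c*x + 3*d*x^2 + 4*e*x^3)
      (2*c + 6*d*x + 12*e*x^2) x := by
    intro x
    have h := (((hasDerivAt_const x b).add ((hasDerivAt_id x).const_mul (2*c))).add
      ((hasDerivAt_pow 2 x).const_mul (3*d))).add ((hasDerivAt_pow 3 x).const_mul (4*e))
    refine h.congr_deriv ?_
    push_cast; ring
  rw [iteratedDeriv_succ, iteratedDeriv_one]
  have hd : deriv (fun t : ℝ => K + b*t + c*t^2 + d*t^3 + e*t^4)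
      = fun x : ℝ => b + 2*c*x + 3*d*x^2 + 4*e*x^3 := funext fun x => (h1 x).deriv
  rw [hd, (h2 0).deriv]
  ring

/-- For `c(X) = tr((XᵀMX − I)²)`, a unit eigenvector `v` of `(X*)ᵀMX*` with the smallest
eigenvalue `λ`, and `D = X* v vᵀ`, the second derivative of `t ↦ c(X* + tD)` at `0`
equals `4λ(3λ − 1)`. -/
theorem stmt_11 {n p : ℕ} (M : Matrix (Fin n) (Fin n) ℝ) (hM : M.PosSemidef)
    (X : Matrix (Fin n) (Fin p) ℝ) (hHerm : (Xᵀ * M * X).IsHermitian)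
    (v : Fin p → ℝ) (lam : ℝ)
    (hv : ∑ i, v i ^ 2 = 1)
    (heig : (Xᵀ * M * X) *ᵥ v = lam • v)
    (hmin : ∀ i, lam ≤ hHerm.eigenvalues i) :
    iteratedDeriv 2
      (fun t : ℝ =>
        (((X + t • (X * vecMulVec v v))ᵀ * M * (X + t • (X * vecMulVec v v)) - 1)
          * ((X + t • (X * vecMulVec v v))ᵀ * M * (X + t • (X * vecMulVec v v)) - 1)).trace)
      0 = 4 * lam * (3 * lam - 1) := by
  set A := Xᵀ * M * X with hA
  set P := vecMulVec v v with hP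
  have hPt : Pᵀ = P := by
    ext i j; simp [hP, vecMulVec_apply, mul_comm]
  have hAt : Aᵀ = A := by
    ext i j
    simpa using congrFun (congrFun hHerm i) j
  have hAP : A * P = lam • P := by
    ext i j
    have h := congrFun heig i
    simp only [mulVec, dotProduct, Pi.smul_apply, smul_eq_mul] at h
    simp only [hP, Matrix.mul_apply, vecMulVec_apply, Matrix.smul_apply, smul_eq_mul]
    calc ∑ k, A i k * (v k * v j) = (∑ k, A i k * v k) * v j := by
          rw [Finset.sum_mul]; exact Finset.sum_congr rfl fun k _ => by ring
      _ = lam * (v i * v j) := by rw [h]; ring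
  have hPA : P * A = lam • P := by
    have h : (A * P)ᵀ = (lam • P)ᵀ := by rw [hAP]
    simpa [transpose_mul, hPt, hAt, transpose_smul] using h
  have hPP : P * P = P := by
    ext i j
    simp only [hP, Matrix.mul_apply, vecMulVec_apply]
    calc ∑ k, v i * v k * (v k * v j) = (v i * v j) * ∑ k, v k ^ 2 := by
          rw [Finset.mul_sum]; exact Finset.sum_congr rfl fun k _ => by ring
      _ = v i * v j := by rw [hv]; ring
  have htrP : P.trace = 1 := by
    simp only [hP, Matrix.trace, Matrix.diag, vecMulVec_apply]
    simpa [pow_two] using hv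
  have hexp : ∀ t : ℝ, (X + t • (X * P))ᵀ * M * (X + t • (X * P)) - 1
      = (A - 1) + (lam * (2 * t + t ^ 2)) • P := by
    intro t
    have hDt : (X * P)ᵀ = P * Xᵀ := by rw [transpose_mul, hPt]
    have e1 : (X + t • (X * P))ᵀ * M * (X + t • (X * P))
        = Xᵀ * (M * X) + t • (P * (Xᵀ * (M * X))) + t • (Xᵀ * (M * (X * P)))
          + (t * t) • (P * (Xᵀ * (M * (X * P)))) := by
      rw [transpose_add, transpose_smul, hDt]
      simp only [Matrix.add_mul, Matrix.mul_add, Matrix.smul_mul, Matrix.mul_smul,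
        smul_smul, Matrix.mul_assoc]
      module
    have e2 : Xᵀ * (M * X) = A := by rw [hA, Matrix.mul_assoc]
    have e3 : Xᵀ * (M * (X * P)) = A * P := by
      rw [hA, Matrix.mul_assoc, Matrix.mul_assoc]
    rw [e1, e2, e3, hAP, hPA]
    have e4 : P * (lam • P) = lam • P := by rw [mul_smul_comm, hPP]
    rw [e4]
    module
  have htBP : ((A - 1) * P).trace = lam - 1 := by
    rw [Matrix.sub_mul, Matrix.one_mul, hAP]
    simp [htrP]
  have htPB : (P * (A - 1)).trace = lam - 1 := by
    rw [Matrix.mul_sub, Matrix.mul_one, hPA]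
    simp [htrP]
  have hfun : (fun t : ℝ =>
        (((X + t • (X * P))ᵀ * M * (X + t • (X * P)) - 1)
          * ((X + t • (X * P))ᵀ * M * (X + t • (X * P)) - 1)).trace)
      = fun t : ℝ => ((A - 1) * (A - 1)).trace + (4 * lam * (lam - 1)) * t
          + (2 * lam * (lam - 1) + 4 * lam ^ 2) * t ^ 2 + (4 * lam ^ 2) * t ^ 3
          + lam ^ 2 * t ^ 4 := by
    funext t
    rw [hexp t]
    set s := lam * (2 * t + t ^ 2) with hs
    have : ((A - 1 + s • P) * (A - 1 + s • P)).trace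
        = ((A - 1) * (A - 1)).trace + s * ((A - 1) * P).trace + s * (P * (A - 1)).trace
          + (s * s) * (P * P).trace := by
      simp only [Matrix.add_mul, Matrix.mul_add, Matrix.smul_mul, Matrix.mul_smul,
        smul_smul, Matrix.trace_add, Matrix.trace_smul, smul_eq_mul]
      ring
    rw [this, htBP, htPB, hPP, htrP, hs]
    ring
  rw [hfun]
  have := iter2_poly (((A - 1) * (A - 1)).trace) (4 * lam * (lam - 1))
    (2 * lam * (lam - 1) + 4 * lam ^ 2) (4 * lam ^ 2) (lam ^ 2)
  rw [this]
  ring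
end
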